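/- For every real number p with 0 < p < 1 and every integer t ≥ 1, ∑_{j=0}^{∞} (1 − (1 − p^j)^t) ≤ 1 + H_t / ln(1/p), where H_t = ∑_{i=1}^t 1/i is the t-th harmonic number. (This sum is the expected value of the maximum of t independent geometric random variables with success probability 1−p, used in the proof of Lemma 3 to bound the expected number of passes in the second sub-stage.) -/

import Mathlib

open Real MeasureTheory Finset

theorem expected_max_geometric_le (p : ℝ) (hp0 : 0 < p) (hp1 : p < 1)
    (t : ℕ) (ht : 1 ≤ t) :
    ∑' j : ℕ, (1 - (1 - p ^ j) ^ t) ≤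
      1 + (∑ i ∈ Finset.range t, (1 : ℝ) / (i + 1)) / Real.log (1 / p) := by
  have hlogp : Real.log p < 0 := Real.log_neg hp0 hp1
  set L : ℝ := -Real.log p with hLdef
  have hL : 0 < L := by simp [hLdef]; linarith
  have hlog1p : Real.log (1 / p) = L := by rw [one_div, Real.log_inv]
  set H : ℝ := ∑ i ∈ Finset.range t, (1 : ℝ) / (i + 1) with hH
  have hH0 : 0 ≤ H := Finset.sum_nonneg fun i _ => by positivity
  set g : ℝ → ℝ := fun x => 1 - (1 - p ^ x) ^ t with hgdef
  set F : ℝ → ℝ := fun x => (∑ i ∈ Finset.range t, (1 - p ^ x) ^ (i + 1) / (i + 1)) / L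
    with hFdef
  have hrpos : ∀ x : ℝ, 0 < p ^ x := fun x => Real.rpow_pos_of_pos hp0 x
  have hrle : ∀ x : ℝ, 0 ≤ x → p ^ x ≤ 1 := fun x hx => Real.rpow_le_one hp0.le hp1.le hx
  -- F is an antiderivative of g
  have hderiv : ∀ x : ℝ, HasDerivAt F (g x) x := by
    intro x
    have h1 : HasDerivAt (fun y : ℝ => p ^ y) (p ^ x * Real.log p) x :=
      (Real.hasStrictDerivAt_const_rpow hp0 x).hasDerivAt
    have h2 : HasDerivAt (fun y : ℝ => 1 - p ^ y) (-(p ^ x * Real.log p)) x :=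
      h1.const_sub 1
    have h3 : ∀ i : ℕ, HasDerivAt (fun y : ℝ => (1 - p ^ y) ^ (i + 1) / (i + 1))
        (((i + 1 : ℕ) * (1 - p ^ x) ^ i * (-(p ^ x * Real.log p))) / (i + 1)) x := by
      intro i
      simpa using (h2.pow (i + 1)).div_const ((i : ℝ) + 1)
    have h4 : HasDerivAt (fun y : ℝ =>
        ∑ i ∈ Finset.range t, (1 - p ^ y) ^ (i + 1) / (i + 1))
        (∑ i ∈ Finset.range t,
          ((i + 1 : ℕ) * (1 - p ^ x) ^ i * (-(p ^ x * Real.log p))) / (i + 1)) x :=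
      HasDerivAt.fun_sum fun i _ => h3 i
    have h5 := h4.div_const L
    refine h5.congr_deriv ?_; symm
    have hsum : ∀ i ∈ Finset.range t,
        ((i + 1 : ℕ) * (1 - p ^ x) ^ i * (-(p ^ x * Real.log p))) / (i + 1)
          = (1 - p ^ x) ^ i * (p ^ x * L) := by
      intro i _
      have hi : ((i : ℝ) + 1) ≠ 0 := by positivity
      push_cast
      field_simp
      ring
    rw [Finset.sum_congr rfl hsum, ← Finset.sum_mul]
    have hgeom : (∑ i ∈ Finset.range t, (1 - p ^ x) ^ i) * ((1 - p ^ x) - 1)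
        = (1 - p ^ x) ^ t - 1 := geom_sum_mul _ _
    simp only [hgdef]
    field_simp
    nlinarith [hgeom]
  have hgcont : Continuous g := by
    have hc : Continuous fun x : ℝ => p ^ x :=
      continuous_iff_continuousAt.2 fun x => Real.continuousAt_const_rpow hp0.ne'
    exact continuous_const.sub ((continuous_const.sub hc).pow t)
  -- FTC on [0, n]
  have hint : ∀ a b : ℝ, IntervalIntegrable g volume a b := fun a b =>
    hgcont.intervalIntegrable a b
  have hFTC : ∀ n : ℕ, ∫ x in (0:ℝ)..(n:ℝ), g x = F n - F 0 := fun n =>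
    intervalIntegral.integral_eq_sub_of_hasDerivAt (fun x _ => hderiv x) (hint 0 n)
  have hF0 : F 0 = 0 := by
    simp [hFdef, Real.rpow_zero]
  -- antitone of g on Ici 0
  have hanti : ∀ x y : ℝ, 0 ≤ x → x ≤ y → g y ≤ g x := by
    intro x y hx hxy
    have h1 : p ^ y ≤ p ^ x := Real.rpow_le_rpow_of_exponent_ge hp0 hp1.le hxy
    have h2 : 0 ≤ 1 - p ^ x := by linarith [hrle x hx]
    have h3 : (1 - p ^ x) ^ t ≤ (1 - p ^ y) ^ t := pow_le_pow_left₀ h2 (by linarith) t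
    simp only [hgdef]
    linarith
  -- step bound: g(j+1) ≤ ∫_j^{j+1} g
  have hstep : ∀ j : ℕ, g ((j : ℝ) + 1) ≤ ∫ x in (j:ℝ)..((j:ℝ)+1), g x := by
    intro j
    have hle : (j : ℝ) ≤ (j : ℝ) + 1 := by linarith
    have := intervalIntegral.integral_mono_on (f := fun _ => g ((j : ℝ) + 1)) (g := g)
      hle (intervalIntegrable_const) (hint _ _)
      (fun x hx => hanti x ((j:ℝ)+1) (le_trans (Nat.cast_nonneg j) hx.1) hx.2)
    simp only [intervalIntegral.integral_const, smul_eq_mul, add_sub_cancel_left,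
      one_mul] at this
    exact this
  -- F n ≤ H / L
  have hFle : ∀ n : ℕ, F n ≤ H / L := by
    intro n
    rw [hFdef]
    apply div_le_div_of_nonneg_right ?_ hL.le
    apply Finset.sum_le_sum
    intro i _
    have hpn : 0 ≤ 1 - p ^ ((n:ℝ)) := by linarith [hrle (n:ℝ) (Nat.cast_nonneg n)]
    have hpn1 : 1 - p ^ ((n:ℝ)) ≤ 1 := by linarith [hrpos (n:ℝ)]
    have hple := pow_le_one₀ hpn hpn1 (n := i + 1)
    have hi : (0:ℝ) < (i:ℝ) + 1 := by positivity
    rw [div_le_div_iff₀ hi hi]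
    nlinarith
  -- partial sums bounded
  have hpart : ∀ n : ℕ, ∑ j ∈ Finset.range n, (1 - (1 - p ^ j) ^ t) ≤ 1 + H / L := by
    intro n
    match n with
    | 0 => simpa using by positivity
    | Nat.succ m =>
      rw [Finset.sum_range_succ']
      have h0 : (1 : ℝ) - (1 - p ^ (0:ℕ)) ^ t = 1 := by
        simp [zero_pow (by omega : t ≠ 0)]
      have hcast : ∀ j : ℕ, (1 : ℝ) - (1 - p ^ (j+1)) ^ t = g ((j:ℝ) + 1) := by
        intro j
        simp only [hgdef]
        rw [show ((j:ℝ) + 1) = ((j+1 : ℕ) : ℝ) by push_cast; ring, Real.rpow_natCast]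
      have hsum : ∑ j ∈ Finset.range m, (1 - (1 - p ^ (j+1)) ^ t)
          ≤ ∑ j ∈ Finset.range m, ∫ x in (j:ℝ)..((j:ℝ)+1), g x := by
        apply Finset.sum_le_sum
        intro j _
        rw [hcast j]
        exact hstep j
      have hadj : ∑ j ∈ Finset.range m, (∫ x in (j:ℝ)..((j:ℝ)+1), g x)
          = ∫ x in (0:ℝ)..(m:ℝ), g x := by
        have := intervalIntegral.sum_integral_adjacent_intervals
          (a := fun k : ℕ => (k : ℝ)) (n := m) (f := g) (μ := volume)
          (fun k _ => hint _ _)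
        simp only [Nat.cast_zero] at this
        convert this using 2 with j
        push_cast
        ring_nf
      have : ∑ j ∈ Finset.range m, (1 - (1 - p ^ (j+1)) ^ t) ≤ H / L := by
        calc ∑ j ∈ Finset.range m, (1 - (1 - p ^ (j+1)) ^ t)
            ≤ ∫ x in (0:ℝ)..(m:ℝ), g x := hsum.trans hadj.le
          _ = F m - F 0 := hFTC m
          _ = F m := by rw [hF0]; ring
          _ ≤ H / L := hFle m
      rw [h0]
      linarith
  -- nonnegativity of terms
  have hnonneg : ∀ j : ℕ, (0:ℝ) ≤ 1 - (1 - p ^ j) ^ t := by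
    intro j
    have h1 : p ^ j ≤ 1 := pow_le_one₀ hp0.le hp1.le
    have h2 : 0 < p ^ j := pow_pos hp0 j
    have h3 : (1 - p ^ j) ^ t ≤ 1 := pow_le_one₀ (by linarith) (by linarith)
    linarith
  rw [hlog1p]
  exact Real.tsum_le_of_sum_range_le hnonneg hpart
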